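/- Fix t and λ ∈ ℝ. Suppose z is an ℝ^K-valued function of a real variable such that z_i(t) > 0 for all i, and each coordinate z_i is differentiable at t with derivative z_i'(t) = λ − φ_i(z(t))·exp(−Σ_{j∈V_i} φ_j(z(t))). Then the function s ↦ Σ_{i=1}^K z_i(s)² is differentiable at t and its derivative at t is at most 2(λ − e^{−1}/V) · Σ_{i=1}^K z_i(t); in particular, if λ ≤ e^{−1}/V, the derivative is at most (λ − e^{−1}/V) · Σ_{i=1}^K z_i(t). -/

import Mathlib

open Finset

/-- The closed neighbourhood `V_i = {i} ∪ {j : (i,j) ∈ E}` of a vertex `i`. -/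
def closedNbhd {K : ℕ} (G : SimpleGraph (Fin K)) [DecidableRel G.Adj] (i : Fin K) :
    Finset (Fin K) :=
  insert i (G.neighborFinset i)

/-- `φ_i(x) = x_i / ∑_{j ∈ V_i} x_j`. -/
noncomputable def phi {K : ℕ} (G : SimpleGraph (Fin K)) [DecidableRel G.Adj]
    (x : Fin K → ℝ) (i : Fin K) : ℝ :=
  x i / ∑ j ∈ closedNbhd G i, x j

lemma mem_closedNbhd_comm {K : ℕ} (G : SimpleGraph (Fin K)) [DecidableRel G.Adj]
    (i j : Fin K) : j ∈ closedNbhd G i ↔ i ∈ closedNbhd G j := by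
  simp only [closedNbhd, Finset.mem_insert, SimpleGraph.mem_neighborFinset]
  constructor
  · rintro (rfl | h)
    · exact Or.inl rfl
    · exact Or.inr h.symm
  · rintro (rfl | h)
    · exact Or.inl rfl
    · exact Or.inr h.symm

lemma sum_swap_closedNbhd {K : ℕ} (G : SimpleGraph (Fin K)) [DecidableRel G.Adj]
    (f : Fin K → Fin K → ℝ) :
    ∑ i, ∑ j ∈ closedNbhd G i, f i j = ∑ j, ∑ i ∈ closedNbhd G j, f i j := by
  have h1 : ∀ i, ∑ j ∈ closedNbhd G i, f i j
      = ∑ j, if j ∈ closedNbhd G i then f i j else 0 := by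
    intro i
    rw [Finset.sum_ite_mem, Finset.univ_inter]
  simp_rw [h1]
  rw [Finset.sum_comm]
  refine Finset.sum_congr rfl fun j _ => ?_
  have h2 : ∑ i, (if i ∈ closedNbhd G j then f i j else 0) = ∑ i ∈ closedNbhd G j, f i j := by
    rw [Finset.sum_ite_mem, Finset.univ_inter]
  rw [← h2]
  refine Finset.sum_congr rfl fun i _ => ?_
  by_cases hij : j ∈ closedNbhd G i
  · rw [if_pos hij, if_pos ((mem_closedNbhd_comm G i j).mp hij)]
  · rw [if_neg hij, if_neg fun hc => hij ((mem_closedNbhd_comm G j i).mp hc)]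

/-- The key inequality: `∑ x_i φ_i e^{-S_i} ≥ e^{-1}/V · ∑ x_i` for a `V`-regular graph. -/
lemma keyIneq {K V : ℕ} (G : SimpleGraph (Fin K)) [DecidableRel G.Adj]
    (hreg : ∀ i, (closedNbhd G i).card = V) (x : Fin K → ℝ) (hx : ∀ i, 0 < x i) :
    Real.exp (-1) / V * ∑ i, x i ≤
      ∑ i, x i * (phi G x i * Real.exp (-∑ j ∈ closedNbhd G i, phi G x j)) := by
  cases isEmpty_or_nonempty (Fin K) with
  | inl h => simp
  | inr h =>
    set D : Fin K → ℝ := fun i => ∑ j ∈ closedNbhd G i, x j with hDdef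
    have hDpos : ∀ i, 0 < D i := fun i =>
      Finset.sum_pos (fun j _ => hx j) ⟨i, Finset.mem_insert_self i _⟩
    have hphi : ∀ i, phi G x i = x i / D i := fun i => rfl
    set S : Fin K → ℝ := fun i => ∑ j ∈ closedNbhd G i, phi G x j with hSdef2
    have hSdef : ∀ i, S i = ∑ j ∈ closedNbhd G i, phi G x j := fun i => rfl
    simp_rw [← hSdef]
    -- sum of D's
    have hDsum : ∑ i, D i = (V : ℝ) * ∑ i, x i := by
      calc ∑ i, D i = ∑ j, ∑ i ∈ closedNbhd G j, x j := sum_swap_closedNbhd G fun i j => x j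
        _ = ∑ j, (closedNbhd G j).card • x j := by
            exact Finset.sum_congr rfl fun j _ => Finset.sum_const (x j)
        _ = ∑ j, (V : ℝ) * x j := by
            refine Finset.sum_congr rfl fun j _ => ?_
            rw [hreg j, nsmul_eq_mul]
        _ = (V : ℝ) * ∑ i, x i := by rw [Finset.mul_sum]
    -- the identity ∑ x_i S_i = ∑ x_i
    have hxS : ∑ i, x i * S i = ∑ i, x i := by
      calc ∑ i, x i * S i = ∑ i, ∑ j ∈ closedNbhd G i, x i * phi G x j := by
            refine Finset.sum_congr rfl fun i _ => ?_
            rw [hSdef, Finset.mul_sum]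
        _ = ∑ j, ∑ i ∈ closedNbhd G j, x i * phi G x j := sum_swap_closedNbhd G _
        _ = ∑ j, x j := by
            refine Finset.sum_congr rfl fun j _ => ?_
            rw [← Finset.sum_mul]
            rw [show (∑ i ∈ closedNbhd G j, x i) = D j from rfl, hphi,
              mul_comm, div_mul_cancel₀ _ (hDpos j).ne']
    -- tangent line bound, summed
    have hsum1 : Real.exp (-(1:ℝ)/2) * ∑ i, x i ≤ ∑ i, x i * Real.exp (-S i / 2) := by
      have htan : ∀ i, x i * (Real.exp (-(1:ℝ)/2) * (1 + (1 - S i)/2))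
          ≤ x i * Real.exp (-S i / 2) := by
        intro i
        refine mul_le_mul_of_nonneg_left ?_ (hx i).le
        have h2 : (1 - S i)/2 + 1 ≤ Real.exp ((1 - S i)/2) := Real.add_one_le_exp _
        have h3 : Real.exp (-S i / 2) = Real.exp (-(1:ℝ)/2) * Real.exp ((1 - S i)/2) := by
          rw [← Real.exp_add]; ring_nf
        rw [h3]
        exact mul_le_mul_of_nonneg_left (by linarith) (Real.exp_pos _).le
      have e1 : ∑ i, x i * (Real.exp (-(1:ℝ)/2) * (1 + (1 - S i)/2))
          = (3/2 * Real.exp (-(1:ℝ)/2)) * (∑ i, x i)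
            - (Real.exp (-(1:ℝ)/2) / 2) * (∑ i, x i * S i) := by
        rw [Finset.mul_sum, Finset.mul_sum, ← Finset.sum_sub_distrib]
        exact Finset.sum_congr rfl fun i _ => by ring
      calc Real.exp (-(1:ℝ)/2) * ∑ i, x i
          = (3/2 * Real.exp (-(1:ℝ)/2)) * (∑ i, x i)
            - (Real.exp (-(1:ℝ)/2) / 2) * (∑ i, x i * S i) := by rw [hxS]; ring
        _ = ∑ i, x i * (Real.exp (-(1:ℝ)/2) * (1 + (1 - S i)/2)) := e1.symm
        _ ≤ ∑ i, x i * Real.exp (-S i / 2) := Finset.sum_le_sum fun i _ => htan i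
    -- Cauchy–Schwarz (Engel form)
    have hcs : (∑ i, x i * Real.exp (-S i / 2))^2 / ((V : ℝ) * ∑ i, x i)
        ≤ ∑ i, x i * (phi G x i * Real.exp (-S i)) := by
      have h := Finset.sq_sum_div_le_sum_sq_div Finset.univ
        (fun i => x i * Real.exp (-S i / 2)) (g := fun i => D i) (fun i _ => hDpos i)
      have e4 : ∀ i, (x i * Real.exp (-S i / 2))^2 / D i
          = x i * (phi G x i * Real.exp (-S i)) := by
        intro i
        rw [mul_pow, hphi]
        have : Real.exp (-S i / 2) ^ 2 = Real.exp (-S i) := by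
          rw [sq, ← Real.exp_add]; ring_nf
        rw [this]
        field_simp
      simp_rw [e4] at h
      rw [hDsum] at h
      exact h
    -- combine everything
    obtain ⟨i0⟩ := h
    have hVpos : 0 < (V : ℝ) := by
      have hc : 0 < (closedNbhd G i0).card :=
        Finset.card_pos.mpr ⟨i0, Finset.mem_insert_self i0 _⟩
      rw [hreg i0] at hc
      exact_mod_cast hc
    have hxsum : 0 < ∑ i, x i := Finset.sum_pos (fun i _ => hx i) ⟨i0, Finset.mem_univ i0⟩
    have hnn : 0 ≤ Real.exp (-(1:ℝ)/2) * ∑ i, x i :=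
      mul_nonneg (Real.exp_pos _).le hxsum.le
    have hsq : (Real.exp (-(1:ℝ)/2) * ∑ i, x i)^2 ≤ (∑ i, x i * Real.exp (-S i / 2))^2 :=
      pow_le_pow_left₀ hnn hsum1 2
    have e5 : (Real.exp (-(1:ℝ)/2) * ∑ i, x i)^2
        = Real.exp (-1) * (∑ i, x i) * (∑ i, x i) := by
      have : Real.exp (-(1:ℝ)/2) ^ 2 = Real.exp (-1) := by
        rw [sq, ← Real.exp_add]; norm_num
      rw [mul_pow, this, sq]
      ring
    have hfinal : Real.exp (-1) * (∑ i, x i) * (∑ i, x i) / ((V : ℝ) * ∑ i, x i)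
        ≤ ∑ i, x i * (phi G x i * Real.exp (-S i)) := by
      refine le_trans ?_ hcs
      gcongr
      rw [← e5]; exact hsq
    calc Real.exp (-1) / (V : ℝ) * ∑ i, x i
        = Real.exp (-1) * (∑ i, x i) * (∑ i, x i) / ((V : ℝ) * ∑ i, x i) := by
          field_simp
      _ ≤ ∑ i, x i * (phi G x i * Real.exp (-S i)) := hfinal

/-- If at time `t` all coordinates of `z` are positive and each coordinate `z_i` is
differentiable at `t` with derivative `λ − φ_i(z(t)) exp(−∑_{j∈V_i} φ_j(z(t)))`, then
`s ↦ ∑_i z_i(s)²` is differentiable at `t` with derivative at most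
`2(λ − e⁻¹/V) ∑_i z_i(t)`; in particular, if `λ ≤ e⁻¹/V`, the derivative is at most
`(λ − e⁻¹/V) ∑_i z_i(t)`. -/
theorem stmt1 {K V : ℕ} (G : SimpleGraph (Fin K)) [DecidableRel G.Adj]
    (hreg : ∀ i, (closedNbhd G i).card = V)
    (lam t : ℝ) (z : ℝ → Fin K → ℝ)
    (hpos : ∀ i, 0 < z t i)
    (hderiv : ∀ i, HasDerivAt (fun s => z s i)
      (lam - phi G (z t) i * Real.exp (-∑ j ∈ closedNbhd G i, phi G (z t) j)) t) :
    ∃ d : ℝ, HasDerivAt (fun s => ∑ i, (z s i) ^ 2) d t ∧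
      d ≤ 2 * (lam - Real.exp (-1) / V) * ∑ i, z t i ∧
      (lam ≤ Real.exp (-1) / V → d ≤ (lam - Real.exp (-1) / V) * ∑ i, z t i) := by
  classical
  have key := keyIneq G hreg (z t) hpos
  set Q := ∑ i, z t i * (phi G (z t) i * Real.exp (-∑ j ∈ closedNbhd G i, phi G (z t) j))
    with hQ
  have hzs : 0 ≤ ∑ i, z t i := Finset.sum_nonneg fun i _ => (hpos i).le
  obtain ⟨d, hd, hdef⟩ : ∃ d, HasDerivAt (fun s => ∑ i, (z s i) ^ 2) d t ∧
      d = 2 * lam * (∑ i, z t i) - 2 * Q := by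
    refine ⟨_, HasDerivAt.fun_sum fun i _ => (hderiv i).pow 2, ?_⟩
    rw [hQ, Finset.mul_sum, Finset.mul_sum, ← Finset.sum_sub_distrib]
    refine Finset.sum_congr rfl fun i _ => ?_
    norm_num
    ring
  have expand : 2 * (lam - Real.exp (-1) / V) * (∑ i, z t i)
      = 2 * lam * (∑ i, z t i) - 2 * (Real.exp (-1) / V * ∑ i, z t i) := by ring
  refine ⟨d, hd, ?_, ?_⟩
  · rw [hdef, expand]
    linarith [key]
  · intro hlam
    rw [hdef]
    have expand2 : (lam - Real.exp (-1) / V) * (∑ i, z t i)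
        = lam * (∑ i, z t i) - Real.exp (-1) / V * (∑ i, z t i) := by ring
    have hnonpos : (lam - Real.exp (-1) / (V:ℝ)) * (∑ i, z t i) ≤ 0 :=
      mul_nonpos_of_nonpos_of_nonneg (by linarith) hzs
    linarith [key, hnonpos, expand2]
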